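/- Let Q ⊂ ℝ^n be a full-dimensional simplicial reflexive polytope, with constant weight function a ≡ 1, so that ε_Q = min{ 1+⟨v,u⟩ : u ∈ V(Q), v ∈ V(Q*), u ∉ F_v }. Then ι_Q ≤ ε_Q. -/

import Mathlib

open Matrix

/-- The polar dual `Q* = {v | ⟨v,u⟩ ≥ -1 for all u ∈ Q}`. -/
def polarDual {n : ℕ} (Q : Set (Fin n → ℝ)) : Set (Fin n → ℝ) :=
  {v | ∀ u ∈ Q, -1 ≤ v ⬝ᵥ u}

/-- A vector of `ℝ^n` is integral if all its coordinates are integers. -/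
def isIntegral {n : ℕ} (u : Fin n → ℝ) : Prop := ∀ i, ∃ z : ℤ, u i = (z : ℝ)

/-- A vector of `(ℝ^n)*` is a primitive element of the dual lattice `(ℤ^n)*` if its
coordinates are integers whose gcd is `1`. -/
def isPrimitive {n : ℕ} (χ : Fin n → ℝ) : Prop :=
  ∃ c : Fin n → ℤ, (∀ i, χ i = (c i : ℝ)) ∧ Finset.univ.gcd c = 1

/-- The set of numbers `a(u)(1 + ⟨v,u⟩)` for `u ∈ V(Q)`, `v ∈ V(Q*)`, `u ∉ F_v`;
`ε_Q` is its minimum. -/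
def epsSet {n : ℕ} (VQ VQd : Finset (Fin n → ℝ)) (a : (Fin n → ℝ) → ℝ) : Set ℝ :=
  {x | ∃ u ∈ VQ, ∃ v ∈ VQd, v ⬝ᵥ u ≠ -1 ∧ x = a u * (1 + v ⬝ᵥ u)}

/-- The set of numbers `(1 + ⟨v,u⟩)/⟨χ_μ,u⟩` over all `(n-2)`-dimensional faces `μ` of the
simplicial reflexive polytope `Q` and both orderings `(F_v, F_{v'})` of the two facets of `Q`
containing `μ`; here `u` is the unique vertex of `F_{v'}` not lying in `μ` (encoded as: `u` is
a vertex of `F_{v'}` not in `F_v`, and all other vertices of `F_{v'}` lie in `F_v`), and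
`χ_μ` is the primitive element of `(ℤ^n)*` vanishing on the linear span of `μ` (i.e. on all
vertices of `F_{v'}` other than `u`) with `⟨χ_μ,u⟩ > 0`.  `ι_Q` is its minimum. -/
def iotaSet {n : ℕ} (VQ VQd : Finset (Fin n → ℝ)) : Set ℝ :=
  {x | ∃ v ∈ VQd, ∃ v' ∈ VQd, v ≠ v' ∧ ∃ u ∈ VQ,
    v' ⬝ᵥ u = -1 ∧ v ⬝ᵥ u ≠ -1 ∧
    (∀ w ∈ VQ, v' ⬝ᵥ w = -1 → w ≠ u → v ⬝ᵥ w = -1) ∧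
    ∃ χ : Fin n → ℝ, isPrimitive χ ∧
      (∀ w ∈ VQ, v' ⬝ᵥ w = -1 → w ≠ u → χ ⬝ᵥ w = 0) ∧
      0 < χ ⬝ᵥ u ∧ x = (1 + v ⬝ᵥ u) / (χ ⬝ᵥ u)}

lemma mem_polarDual_hull {n : ℕ} (S : Finset (Fin n → ℝ)) (v : Fin n → ℝ)
    (h : ∀ u ∈ S, -1 ≤ v ⬝ᵥ u) : v ∈ polarDual (convexHull ℝ (S : Set (Fin n → ℝ))) := by
  intro u hu
  have hconv : Convex ℝ {u : Fin n → ℝ | -1 ≤ v ⬝ᵥ u} := by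
    have hlin : IsLinearMap ℝ (fun u : Fin n → ℝ => v ⬝ᵥ u) :=
      ⟨fun x y => dotProduct_add _ _ _, fun c x => dotProduct_smul _ _ _⟩
    exact convex_halfSpace_ge hlin (-1)
  exact convexHull_min (fun u hu => h u hu) hconv hu

lemma isIntegral_dot {n : ℕ} {x y : Fin n → ℝ} (hx : isIntegral x) (hy : isIntegral y) :
    ∃ z : ℤ, x ⬝ᵥ y = (z : ℝ) := by
  choose a ha using hx
  choose b hb using hy
  refine ⟨∑ i, a i * b i, ?_⟩
  simp [dotProduct, ha, hb]


set_option maxHeartbeats 1000000 in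
/-- For a full-dimensional simplicial reflexive polytope `Q ⊂ ℝ^n` with the
constant weight `a ≡ 1`, the pseudo-index `ι_Q` satisfies `ι_Q ≤ ε_Q`. -/
theorem iota_le_eps {n : ℕ} (hn : 1 ≤ n)
    (VQ VQd : Finset (Fin n → ℝ))
    -- `VQ` is the vertex set of the polytope `Q = conv(VQ)`
    (hVQ : (VQ : Set (Fin n → ℝ)) =
      Set.extremePoints ℝ (convexHull ℝ (VQ : Set (Fin n → ℝ))))
    -- `0` lies in the interior of `Q` (in particular `Q` is full-dimensional)
    (h0 : (0 : Fin n → ℝ) ∈ interior (convexHull ℝ (VQ : Set (Fin n → ℝ))))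
    -- `VQd` is the vertex set of the polar dual `Q*`
    (hVQd : (VQd : Set (Fin n → ℝ)) =
      Set.extremePoints ℝ (polarDual (convexHull ℝ (VQ : Set (Fin n → ℝ)))))
    -- `Q` is simplicial: every facet has exactly `n` vertices
    (hsimp : ∀ v ∈ VQd, (VQ.filter fun u => v ⬝ᵥ u = -1).card = n)
    -- `Q` is reflexive: vertices of `Q` and of `Q*` are lattice points
    (hrefl : ∀ u ∈ VQ, isIntegral u) (hrefld : ∀ v ∈ VQd, isIntegral v)
    -- `ε` is the minimum `ε_Q` for the constant weight `a ≡ 1`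
    (ε : ℝ) (hε : IsLeast (epsSet VQ VQd fun _ => 1) ε)
    -- `ι` is the pseudo-index `ι_Q`
    (ι : ℝ) (hι : IsLeast (iotaSet VQ VQd) ι) :
    ι ≤ ε := by
  classical
  set Q : Set (Fin n → ℝ) := convexHull ℝ (VQ : Set (Fin n → ℝ)) with hQdef
  obtain ⟨u₀, hu₀, v₀, hv₀, hneq, hεeq⟩ := hε.1
  simp only [one_mul] at hεeq
  have hVQsub : (VQ : Set (Fin n → ℝ)) ⊆ Q := subset_convexHull ℝ _
  have hdual : ∀ v ∈ VQd, ∀ u ∈ VQ, -1 ≤ v ⬝ᵥ u := by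
    intro v hv u hu
    have hvmem : v ∈ Set.extremePoints ℝ (polarDual Q) := by
      rw [← hVQd]; exact_mod_cast hv
    exact (extremePoints_subset hvmem) u (hVQsub hu)
  have hextd : ∀ v ∈ VQd, v ∈ Set.extremePoints ℝ (polarDual Q) := by
    intro v hv; rw [← hVQd]; exact_mod_cast hv
  have huext : u₀ ∈ Set.extremePoints ℝ Q := by
    rw [← hVQ]; exact_mod_cast hu₀
  have hεpos : 0 < ε := by
    have h := hdual v₀ hv₀ u₀ hu₀
    rcases lt_or_eq_of_le h with h' | h'
    · linarith
    · exact absurd h'.symm hneq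
  -- the facet of v₀, enumerated by `b`
  set F : Finset (Fin n → ℝ) := VQ.filter (fun w => v₀ ⬝ᵥ w = -1) with hFdef
  have hFcard : F.card = n := hsimp v₀ hv₀
  set e := F.equivFinOfCardEq hFcard with hedef
  set b : Fin n → (Fin n → ℝ) := fun i => ((e.symm i : F) : Fin n → ℝ) with hbdef
  have hbF : ∀ i, b i ∈ F := fun i => (e.symm i).2
  have hbVQ : ∀ i, b i ∈ VQ := fun i => Finset.mem_of_mem_filter _ (hbF i)
  have hbv₀ : ∀ i, v₀ ⬝ᵥ b i = -1 := fun i => (Finset.mem_filter.1 (hbF i)).2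
  have hbsurj : ∀ w ∈ F, ∃ i, b i = w := by
    intro w hw
    exact ⟨e ⟨w, hw⟩, by simp [hbdef]⟩
  have hbinj : Function.Injective b := by
    intro i k h
    exact e.symm.injective (Subtype.ext h)
  have hu₀F : u₀ ∉ F := fun h => hneq (Finset.mem_filter.1 h).2
  -- the matrix with rows the vertices of the facet
  set M : Matrix (Fin n) (Fin n) ℝ := Matrix.of (fun i k => b i k) with hMdef
  have hMrow : ∀ (x : Fin n → ℝ) (i : Fin n), (M *ᵥ x) i = b i ⬝ᵥ x := fun x i => rfl
  -- u₀ is nonzero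
  have hu₀ne : u₀ ≠ 0 := by
    intro h
    obtain ⟨δ, hδ, hball⟩ := Metric.mem_nhds_iff.1 (mem_interior_iff_mem_nhds.1 h0)
    set e₀ : Fin n → ℝ := Pi.single (⟨0, hn⟩ : Fin n) (δ/2) with he₀def
    have he₀Q : e₀ ∈ Q := by
      apply hball
      simp only [Metric.mem_ball, dist_zero_right, he₀def, Pi.norm_single, Real.norm_eq_abs]
      rw [abs_of_nonneg (by linarith)]; linarith
    have hme₀Q : -e₀ ∈ Q := by
      apply hball
      simp only [Metric.mem_ball, dist_zero_right, norm_neg, he₀def, Pi.norm_single,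
        Real.norm_eq_abs]
      rw [abs_of_nonneg (by linarith)]; linarith
    have hseg : u₀ ∈ openSegment ℝ e₀ (-e₀) := by
      refine ⟨1/2, 1/2, by norm_num, by norm_num, by norm_num, ?_⟩
      rw [h]; module
    have h1 := (huext.2 he₀Q hme₀Q hseg)
    have h2 := congrFun h1 ⟨0, hn⟩
    simp only [he₀def, Pi.single_eq_same, Pi.zero_apply] at h2
    rw [h] at h2
    simp only [Pi.zero_apply] at h2
    linarith
  -- determinant nonzero, by extremality of v₀
  have hdet : M.det ≠ 0 := by
    intro hd
    obtain ⟨ψ, hψ0, hψ⟩ := Matrix.exists_mulVec_eq_zero_iff.2 hd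
    have hψF : ∀ w ∈ F, ψ ⬝ᵥ w = 0 := by
      intro w hw
      obtain ⟨i, rfl⟩ := hbsurj w hw
      have h := congrFun hψ i
      rw [hMrow] at h
      rw [dotProduct_comm]
      simpa using h
    set G : Finset (Fin n → ℝ) := VQ.filter (fun w => v₀ ⬝ᵥ w ≠ -1) with hGdef
    set Sf : Finset ℝ := insert (1:ℝ) (G.image fun w => (1 + v₀ ⬝ᵥ w)/(1 + |ψ ⬝ᵥ w|))
      with hSfdef
    have hSfne : Sf.Nonempty := ⟨1, Finset.mem_insert_self _ _⟩
    set t : ℝ := Sf.min' hSfne with htdef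
    have htpos : 0 < t := by
      have hmem := Sf.min'_mem hSfne
      rw [← htdef] at hmem
      rcases Finset.mem_insert.1 hmem with h | h
      · rw [h]; norm_num
      · obtain ⟨w, hwG, hweq⟩ := Finset.mem_image.1 h
        have hw1 : -1 ≤ v₀ ⬝ᵥ w := hdual v₀ hv₀ w (Finset.mem_of_mem_filter _ hwG)
        have hw2 : v₀ ⬝ᵥ w ≠ -1 := (Finset.mem_filter.1 hwG).2
        have hnum : 0 < 1 + v₀ ⬝ᵥ w := by
          rcases lt_or_eq_of_le hw1 with h' | h'
          · linarith
          · exact absurd h'.symm hw2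
        rw [← hweq]
        positivity
    have hbound : ∀ w ∈ VQ, t * |ψ ⬝ᵥ w| ≤ 1 + v₀ ⬝ᵥ w ∨ ψ ⬝ᵥ w = 0 := by
      intro w hw
      by_cases hwF : w ∈ F
      · exact Or.inr (hψF w hwF)
      · left
        have hwG : w ∈ G := by
          rw [hGdef, Finset.mem_filter]
          exact ⟨hw, fun hcon => hwF (Finset.mem_filter.2 ⟨hw, hcon⟩)⟩
        have hle : t ≤ (1 + v₀ ⬝ᵥ w)/(1 + |ψ ⬝ᵥ w|) :=
          Finset.min'_le _ _ (Finset.mem_insert_of_mem (Finset.mem_image_of_mem _ hwG))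
        have hden : (0:ℝ) < 1 + |ψ ⬝ᵥ w| := by positivity
        have h2 := (le_div_iff₀ hden).1 hle
        nlinarith [abs_nonneg (ψ ⬝ᵥ w), htpos]
    have hmempm : ∀ s : ℝ, |s| ≤ t → v₀ + s • ψ ∈ polarDual Q := by
      intro s hs
      apply mem_polarDual_hull
      intro w hw
      rw [add_dotProduct, smul_dotProduct, smul_eq_mul]
      rcases hbound w hw with h | h
      · have habs : |s * (ψ ⬝ᵥ w)| ≤ 1 + v₀ ⬝ᵥ w := by
          rw [abs_mul]
          calc |s| * |ψ ⬝ᵥ w| ≤ t * |ψ ⬝ᵥ w| := by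
                apply mul_le_mul_of_nonneg_right hs (abs_nonneg _)
            _ ≤ 1 + v₀ ⬝ᵥ w := h
        have := neg_abs_le (s * (ψ ⬝ᵥ w))
        linarith
      · rw [h, mul_zero]
        simpa using hdual v₀ hv₀ w hw
    have hm1 : v₀ + t • ψ ∈ polarDual Q := hmempm t (by rw [abs_of_pos htpos])
    have hm2 : v₀ + (-t) • ψ ∈ polarDual Q := hmempm (-t) (by rw [abs_neg, abs_of_pos htpos])
    have hseg : v₀ ∈ openSegment ℝ (v₀ + t • ψ) (v₀ + (-t) • ψ) := by
      refine ⟨1/2, 1/2, by norm_num, by norm_num, by norm_num, ?_⟩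
      module
    have h1 := ((hextd v₀ hv₀).2 hm1 hm2 hseg)
    have h2 : t • ψ = 0 := by
      have := congrArg (fun x => x - v₀) h1
      simpa [add_sub_cancel_left] using this
    rcases smul_eq_zero.1 h2 with h | h
    · exact absurd h (ne_of_gt htpos)
    · exact hψ0 h
  have hdetu : IsUnit M.det := isUnit_iff_ne_zero.2 hdet
  have hMM : M⁻¹ * M = 1 := Matrix.nonsing_inv_mul M hdetu
  have hMM' : M * M⁻¹ = 1 := Matrix.mul_nonsing_inv M hdetu
  have hMcancel : ∀ x : Fin n → ℝ, M *ᵥ x = 0 → x = 0 := by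
    intro x hx
    have h : M⁻¹ *ᵥ (M *ᵥ x) = x := by
      rw [Matrix.mulVec_mulVec, hMM, Matrix.one_mulVec]
    rw [hx] at h
    simpa using h.symm
  have hcoord : ∀ u y : Fin n → ℝ, u ⬝ᵥ y = (u ᵥ* M⁻¹) ⬝ᵥ (M *ᵥ y) := by
    intro u y
    conv_rhs => rw [Matrix.dotProduct_mulVec, Matrix.vecMul_vecMul, hMM, Matrix.vecMul_one]
  set cvec : Fin n → ℝ := u₀ ᵥ* M⁻¹ with hcdef
  have hu₀sum : u₀ = ∑ i, cvec i • b i := by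
    have h1 : cvec ᵥ* M = u₀ := by
      rw [hcdef, Matrix.vecMul_vecMul, hMM, Matrix.vecMul_one]
    funext k
    rw [← h1]
    simp [Matrix.vecMul, dotProduct, hMdef]
  have hMv₀ : M *ᵥ v₀ = fun _ => (-1:ℝ) := by
    funext i
    rw [hMrow, dotProduct_comm]
    exact hbv₀ i
  have hsumc : v₀ ⬝ᵥ u₀ = -∑ i, cvec i := by
    rw [dotProduct_comm, hcoord u₀ v₀, hMv₀, ← hcdef]
    simp [dotProduct, mul_neg]
  have hexj : ∃ j, cvec j < 0 := by
    by_contra hcon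
    push_neg at hcon
    have hσnn : 0 ≤ ∑ i, cvec i := Finset.sum_nonneg (fun i _ => hcon i)
    rcases eq_or_lt_of_le hσnn with hσ0 | hσpos
    · have hall := (Finset.sum_eq_zero_iff_of_nonneg (fun i _ => hcon i)).1 hσ0.symm
      apply hu₀ne
      rw [hu₀sum]
      exact Finset.sum_eq_zero (fun i _ => by rw [hall i (Finset.mem_univ i), zero_smul])
    · set σ : ℝ := ∑ i, cvec i with hσdef
      have hσlt : σ < 1 := by
        have : σ = 1 - ε := by rw [hσdef]; linarith [hsumc, hεeq]
        linarith
      have hp : σ⁻¹ • u₀ ∈ Q := by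
        rw [hu₀sum, Finset.smul_sum]
        simp_rw [smul_smul]
        apply Convex.sum_mem (convex_convexHull ℝ _)
        · intro i _
          exact mul_nonneg (inv_nonneg.2 hσpos.le) (hcon i)
        · rw [← Finset.mul_sum, ← hσdef, inv_mul_cancel₀ (ne_of_gt hσpos)]
        · intro i _
          exact hVQsub (hbVQ i)
      have hseg : u₀ ∈ openSegment ℝ (σ⁻¹ • u₀) 0 := by
        refine ⟨σ, 1 - σ, hσpos, by linarith, by ring, ?_⟩
        rw [smul_smul, mul_inv_cancel₀ (ne_of_gt hσpos)]
        simp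
      have h0Q : (0 : Fin n → ℝ) ∈ Q := interior_subset h0
      exact hu₀ne ((huext.2 h0Q hp (by rw [openSegment_symm]; exact hseg))).symm
  obtain ⟨j, hcj⟩ := hexj
  set ψ : Fin n → ℝ := M⁻¹ *ᵥ Pi.single j 1 with hψdef
  have hMψ : M *ᵥ ψ = Pi.single j 1 := by
    rw [hψdef, Matrix.mulVec_mulVec, hMM', Matrix.one_mulVec]
  have hbψ : ∀ i, b i ⬝ᵥ ψ = if i = j then 1 else 0 := by
    intro i
    have h := congrFun hMψ i
    rw [hMrow] at h
    rw [h, Pi.single_apply]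
  have hψu₀ : u₀ ⬝ᵥ ψ = cvec j := by
    rw [hcoord u₀ ψ, hMψ, ← hcdef, dotProduct_single, mul_one]
  -- integral structure
  have hbint : ∀ i, isIntegral (b i) := fun i => hrefl (b i) (hbVQ i)
  choose Mzf hMzf using hbint
  set Mz : Matrix (Fin n) (Fin n) ℤ := Matrix.of Mzf with hMzdef
  have hMmap : M = Mz.map (Int.cast : ℤ → ℝ) := by
    funext i k
    simp only [hMdef, hMzdef, Matrix.map_apply, Matrix.of_apply]
    exact hMzf i k
  have hdetz : M.det = ((Mz.det : ℤ) : ℝ) := by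
    have h := RingHom.map_det (Int.castRingHom ℝ) Mz
    simp only [RingHom.mapMatrix_apply, Int.coe_castRingHom] at h
    rw [hMmap, ← h]
  have hadj : M.adjugate = (Mz.adjugate).map (Int.cast : ℤ → ℝ) := by
    have h := RingHom.map_adjugate (Int.castRingHom ℝ) Mz
    simp only [RingHom.mapMatrix_apply, Int.coe_castRingHom] at h
    rw [hMmap, ← h]
  set D : ℤ := Mz.det with hDdef
  have hDR : ((D : ℤ) : ℝ) ≠ 0 := by
    rw [← hdetz]; exact hdet
  have hψk : ∀ k, ψ k = ((D : ℤ) : ℝ)⁻¹ * ((Mz.adjugate k j : ℤ) : ℝ) := by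
    intro k
    have h1 : ψ k = M⁻¹ k j := by
      rw [hψdef]
      show M⁻¹ k ⬝ᵥ Pi.single j 1 = _
      rw [dotProduct_single, mul_one]
    rw [h1, Matrix.inv_def, Matrix.smul_apply, hadj, Matrix.map_apply, smul_eq_mul,
      Ring.inverse_eq_inv', hdetz]
  set aD : ℝ := |((D : ℤ) : ℝ)| with haDdef
  have haD : 0 < aD := abs_pos.2 hDR
  set ζ : Fin n → ℤ := fun k => if 0 ≤ D then -(Mz.adjugate k j) else Mz.adjugate k j
    with hζdef
  have hζcast : ∀ k, (ζ k : ℝ) = -aD * ψ k := by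
    intro k
    simp only [hψk k, hζdef, haDdef]
    by_cases h : 0 ≤ D
    · rw [if_pos h, abs_of_nonneg (by exact_mod_cast h)]
      push_cast
      field_simp
    · rw [if_neg h]
      push_neg at h
      rw [abs_of_neg (by exact_mod_cast h)]
      push_cast
      field_simp
  have hψne : ∃ k, ψ k ≠ 0 := by
    by_contra hcon
    push_neg at hcon
    have h : b j ⬝ᵥ ψ = 0 := by
      simp [dotProduct, hcon]
    rw [hbψ j, if_pos rfl] at h
    norm_num at h
  obtain ⟨k₀, hk₀⟩ := hψne
  have hζk₀ : ζ k₀ ≠ 0 := by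
    intro h
    have h2 := hζcast k₀
    rw [h] at h2
    have h3 : -aD * ψ k₀ = 0 := by rw [← h2]; simp
    rcases mul_eq_zero.1 h3 with h4 | h4
    · linarith
    · exact hk₀ h4
  set g : ℤ := Finset.univ.gcd ζ with hgdef
  have hgdvd : ∀ k, g ∣ ζ k := fun k => Finset.gcd_dvd (Finset.mem_univ k)
  have hg0 : g ≠ 0 := by
    intro h
    exact hζk₀ (Finset.gcd_eq_zero_iff.1 h k₀ (Finset.mem_univ k₀))
  have hgnn : 0 ≤ g := Int.nonneg_of_normalize_eq_self Finset.normalize_gcd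
  have hgpos : 0 < g := lt_of_le_of_ne hgnn (Ne.symm hg0)
  set χz : Fin n → ℤ := fun k => ζ k / g with hχzdef
  have hprim : Finset.univ.gcd χz = 1 := Finset.gcd_div_eq_one (Finset.mem_univ k₀) hζk₀
  set χ : Fin n → ℝ := fun k => ((χz k : ℤ) : ℝ) with hχdef
  have hgR : (0:ℝ) < (g:ℝ) := by exact_mod_cast hgpos
  set s : ℝ := aD / (g : ℝ) with hsdef
  have hspos : 0 < s := div_pos haD hgR
  have hχval : ∀ k, χ k = -s * ψ k := by
    intro k
    rw [hχdef]
    show ((ζ k / g : ℤ) : ℝ) = -s * ψ k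
    rw [Int.cast_div_charZero (hgdvd k), hζcast k, hsdef]
    field_simp
  have hχdot : ∀ x : Fin n → ℝ, χ ⬝ᵥ x = -s * (ψ ⬝ᵥ x) := by
    intro x
    simp only [dotProduct]
    rw [Finset.mul_sum]
    exact Finset.sum_congr rfl (fun k _ => by rw [hχval k]; ring)
  -- minimization over T
  set T : Finset (Fin n → ℝ) := VQ.filter (fun w => ψ ⬝ᵥ w < 0) with hTdef
  have hψu₀' : ψ ⬝ᵥ u₀ < 0 := by
    rw [dotProduct_comm, hψu₀]; exact hcj
  have hu₀T : u₀ ∈ T := Finset.mem_filter.2 ⟨hu₀, hψu₀'⟩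
  set R : (Fin n → ℝ) → ℝ := fun w => (1 + v₀ ⬝ᵥ w) / (-(ψ ⬝ᵥ w)) with hRdef
  obtain ⟨ws, hwsT, hwsmin⟩ := T.exists_min_image R ⟨u₀, hu₀T⟩
  have hwsVQ : ws ∈ VQ := Finset.mem_of_mem_filter _ hwsT
  have hψws : ψ ⬝ᵥ ws < 0 := (Finset.mem_filter.1 hwsT).2
  have hTne : ∀ w ∈ T, v₀ ⬝ᵥ w ≠ -1 := by
    intro w hw hcon
    have hwF : w ∈ F := Finset.mem_filter.2 ⟨Finset.mem_of_mem_filter _ hw, hcon⟩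
    obtain ⟨i, rfl⟩ := hbsurj w hwF
    have h := (Finset.mem_filter.1 hw).2
    rw [dotProduct_comm, hbψ i] at h
    split_ifs at h <;> linarith
  have hnumpos : ∀ w ∈ T, 0 < 1 + v₀ ⬝ᵥ w := by
    intro w hw
    have h1 := hdual v₀ hv₀ w (Finset.mem_of_mem_filter _ hw)
    rcases lt_or_eq_of_le h1 with h | h
    · linarith
    · exact absurd h.symm (hTne w hw)
  have hRpos : ∀ w ∈ T, 0 < R w := by
    intro w hw
    have h := (Finset.mem_filter.1 hw).2
    exact div_pos (hnumpos w hw) (by linarith)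
  set t : ℝ := R ws with htdef
  have htpos : 0 < t := hRpos ws hwsT
  set v' : Fin n → ℝ := v₀ + t • ψ with hv'def
  have hv'dot : ∀ x, v' ⬝ᵥ x = v₀ ⬝ᵥ x + t * (ψ ⬝ᵥ x) := by
    intro x
    rw [hv'def, add_dotProduct, smul_dotProduct, smul_eq_mul]
  have htws : t * (-(ψ ⬝ᵥ ws)) = 1 + v₀ ⬝ᵥ ws := by
    have ht' : t = (1 + v₀ ⬝ᵥ ws) / (-(ψ ⬝ᵥ ws)) := htdef
    have hden : -(ψ ⬝ᵥ ws) ≠ 0 := ne_of_gt (by linarith)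
    rw [ht']
    exact div_mul_cancel₀ _ hden
  have hv'ws : v' ⬝ᵥ ws = -1 := by
    rw [hv'dot]
    linarith [htws]
  have hv'pd : v' ∈ polarDual Q := by
    apply mem_polarDual_hull
    intro w hw
    rw [hv'dot]
    by_cases hψw : ψ ⬝ᵥ w < 0
    · have hwT : w ∈ T := Finset.mem_filter.2 ⟨hw, hψw⟩
      have hle : t ≤ (1 + v₀ ⬝ᵥ w) / (-(ψ ⬝ᵥ w)) := hwsmin w hwT
      have hden : (0:ℝ) < -(ψ ⬝ᵥ w) := by linarith
      have h2 := (le_div_iff₀ hden).1 hle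
      linarith
    · push_neg at hψw
      have h1 := hdual v₀ hv₀ w hw
      nlinarith [mul_nonneg htpos.le hψw]
  have hv'b : ∀ i, i ≠ j → v' ⬝ᵥ b i = -1 := by
    intro i hij
    rw [hv'dot, dotProduct_comm ψ (b i), hbψ i, if_neg hij, hbv₀ i]
    ring
  have hv'bj : v' ⬝ᵥ b j = -1 + t := by
    rw [hv'dot, dotProduct_comm ψ (b j), hbψ j, if_pos rfl, hbv₀ j]
    ring
  -- key nondegeneracy
  have hdws : ws ⬝ᵥ ψ = (ws ᵥ* M⁻¹) j := by
    rw [hcoord ws ψ, hMψ, dotProduct_single, mul_one]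
  have hkey : ∀ x : Fin n → ℝ, (∀ i, i ≠ j → b i ⬝ᵥ x = 0) → ws ⬝ᵥ x = 0 → x = 0 := by
    intro x hbx hwx
    set d : Fin n → ℝ := ws ᵥ* M⁻¹ with hddef
    have hdj : d j ≠ 0 := by
      rw [← hdws, dotProduct_comm]
      exact ne_of_lt hψws
    have hexp : ws ⬝ᵥ x = ∑ i, d i * (b i ⬝ᵥ x) := by
      rw [hcoord ws x, ← hddef]
      simp only [dotProduct, hMrow]
    have hbjx : b j ⬝ᵥ x = 0 := by
      have h1 : ws ⬝ᵥ x = d j * (b j ⬝ᵥ x) := by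
        rw [hexp]
        rw [Finset.sum_eq_single j]
        · intro i _ hij
          rw [hbx i hij, mul_zero]
        · intro h
          exact absurd (Finset.mem_univ j) h
      rw [hwx] at h1
      rcases mul_eq_zero.1 h1.symm with h | h
      · exact absurd h hdj
      · exact h
    apply hMcancel
    funext i
    rw [hMrow]
    by_cases hij : i = j
    · rw [hij]; simpa using hbjx
    · simpa using hbx i hij
  -- v' is an extreme point of the polar dual
  have hv'ext : v' ∈ Set.extremePoints ℝ (polarDual Q) := by
    refine ⟨hv'pd, ?_⟩
    intro v₁ h₁ v₂ h₂ hseg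
    obtain ⟨a1, a2, ha1, ha2, hsum, heq⟩ := hseg
    have hactive : ∀ w, w ∈ VQ → v' ⬝ᵥ w = -1 → v₁ ⬝ᵥ w = -1 ∧ v₂ ⬝ᵥ w = -1 := by
      intro w hw hvw
      have e1 : -1 ≤ v₁ ⬝ᵥ w := h₁ w (hVQsub hw)
      have e2 : -1 ≤ v₂ ⬝ᵥ w := h₂ w (hVQsub hw)
      have e3 : a1 * (v₁ ⬝ᵥ w) + a2 * (v₂ ⬝ᵥ w) = -1 := by
        have h3 : (a1 • v₁ + a2 • v₂) ⬝ᵥ w = v' ⬝ᵥ w := by rw [heq]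
        rw [add_dotProduct, smul_dotProduct, smul_dotProduct, smul_eq_mul, smul_eq_mul,
          hvw] at h3
        exact h3
      constructor <;> nlinarith
    have hv12 : v₁ = v₂ := by
      have hx : v₁ - v₂ = 0 := by
        apply hkey
        · intro i hij
          have h := hactive (b i) (hbVQ i) (hv'b i hij)
          rw [dotProduct_sub, dotProduct_comm (b i) v₁, dotProduct_comm (b i) v₂, h.1, h.2]
          ring
        · have h := hactive ws hwsVQ hv'ws
          rw [dotProduct_sub, dotProduct_comm ws v₁, dotProduct_comm ws v₂, h.1, h.2]
          ring
      exact sub_eq_zero.1 hx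
    have hveq : v₂ = v' := by
      rw [← heq, hv12, ← add_smul, hsum, one_smul]
    exact hv12.trans hveq
  have hv'VQd : v' ∈ VQd := by
    have h : v' ∈ (VQd : Set (Fin n → ℝ)) := by rw [hVQd]; exact hv'ext
    exact_mod_cast h
  -- the facet of v' is exactly {ws} ∪ {b i : i ≠ j}
  set F' : Finset (Fin n → ℝ) := VQ.filter (fun w => v' ⬝ᵥ w = -1) with hF'def
  have hF'card : F'.card = n := hsimp v' hv'VQd
  set S : Finset (Fin n → ℝ) := insert ws ((Finset.univ.erase j).image b) with hSdef
  have hwsnotb : ∀ i, ws ≠ b i := by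
    intro i h
    have h2 := hψws
    rw [h, dotProduct_comm, hbψ i] at h2
    split_ifs at h2 <;> linarith
  have hSsub : S ⊆ F' := by
    intro w hw
    rcases Finset.mem_insert.1 hw with h | h
    · subst h
      exact Finset.mem_filter.2 ⟨hwsVQ, hv'ws⟩
    · obtain ⟨i, hi, rfl⟩ := Finset.mem_image.1 h
      exact Finset.mem_filter.2 ⟨hbVQ i, hv'b i (Finset.mem_erase.1 hi).1⟩
  have hScard : S.card = n := by
    rw [hSdef, Finset.card_insert_of_notMem, Finset.card_image_of_injective _ hbinj,
      Finset.card_erase_of_mem (Finset.mem_univ j), Finset.card_univ, Fintype.card_fin]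
    · omega
    · intro h
      obtain ⟨i, _, hi⟩ := Finset.mem_image.1 h
      exact hwsnotb i hi.symm
  have hSF' : S = F' := Finset.eq_of_subset_of_card_le hSsub (by rw [hF'card, hScard])
  have hmemF' : ∀ w ∈ VQ, v' ⬝ᵥ w = -1 → w ≠ ws → ∃ i, i ≠ j ∧ w = b i := by
    intro w hw hvw hne
    have h : w ∈ S := by rw [hSF']; exact Finset.mem_filter.2 ⟨hw, hvw⟩
    rcases Finset.mem_insert.1 h with h' | h'
    · exact absurd h' hne
    · obtain ⟨i, hi, rfl⟩ := Finset.mem_image.1 h'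
      exact ⟨i, (Finset.mem_erase.1 hi).1, rfl⟩
  -- assemble the element of iotaSet
  have hv₀ws : v₀ ⬝ᵥ ws ≠ -1 := hTne ws hwsT
  have hχws : 0 < χ ⬝ᵥ ws := by
    rw [hχdot]
    nlinarith
  have hχu₀ : 0 < χ ⬝ᵥ u₀ := by
    rw [hχdot]
    nlinarith
  have hne' : v₀ ≠ v' := by
    intro h
    have h2 := hv'bj
    rw [← h, hbv₀ j] at h2
    linarith
  set xval : ℝ := (1 + v₀ ⬝ᵥ ws) / (χ ⬝ᵥ ws) with hxdef
  have hχint : isIntegral χ := fun k => ⟨χz k, rfl⟩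
  have hxmem : xval ∈ iotaSet VQ VQd := by
    refine ⟨v₀, hv₀, v', hv'VQd, hne', ws, hwsVQ, hv'ws, hv₀ws, ?_, χ,
      ⟨χz, fun k => rfl, hprim⟩, ?_, hχws, rfl⟩
    · intro w hw hvw hne
      obtain ⟨i, hij, rfl⟩ := hmemF' w hw hvw hne
      exact hbv₀ i
    · intro w hw hvw hne
      obtain ⟨i, hij, rfl⟩ := hmemF' w hw hvw hne
      rw [hχdot, dotProduct_comm ψ (b i), hbψ i, if_neg hij]
      ring
  have hιle : ι ≤ xval := hι.2 hxmem
  -- xval ≤ ε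
  have hχu₀one : (1:ℝ) ≤ χ ⬝ᵥ u₀ := by
    obtain ⟨z, hz⟩ := isIntegral_dot hχint (hrefl u₀ hu₀)
    rw [hz] at hχu₀ ⊢
    have hz0 : (0:ℤ) < z := by exact_mod_cast hχu₀
    exact_mod_cast hz0
  have hxle : xval ≤ ε := by
    have h1 : χ ⬝ᵥ ws = s * (-(ψ ⬝ᵥ ws)) := by rw [hχdot]; ring
    have h2 : χ ⬝ᵥ u₀ = s * (-(ψ ⬝ᵥ u₀)) := by rw [hχdot]; ring
    have htle : t ≤ ε / (-(ψ ⬝ᵥ u₀)) := by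
      have h3 : t ≤ (1 + v₀ ⬝ᵥ u₀) / (-(ψ ⬝ᵥ u₀)) := hwsmin u₀ hu₀T
      have h4 : (1 + v₀ ⬝ᵥ u₀) = ε := by linarith [hεeq]
      rw [h4] at h3
      exact h3
    have hxval : xval = t / s := by
      have ht' : t = (1 + v₀ ⬝ᵥ ws) / (-(ψ ⬝ᵥ ws)) := htdef
      rw [hxdef, h1, ht', div_div]
      congr 1
      ring
    rw [hxval]
    have hden : (0:ℝ) < -(ψ ⬝ᵥ u₀) := by linarith
    calc t / s ≤ (ε / (-(ψ ⬝ᵥ u₀))) / s := by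
          gcongr
      _ = ε / (s * (-(ψ ⬝ᵥ u₀))) := by rw [div_div]; congr 1; ring
      _ = ε / (χ ⬝ᵥ u₀) := by rw [h2]
      _ ≤ ε := div_le_self hεpos.le (by rw [h2] at hχu₀one ⊢; exact hχu₀one)
  linarith
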